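/- Reduction from arbitrary cache capacities to unit caches (sum utilities): fix a capacitated CSR game with sum utilities and its expanded unit-capacity game (as in the context), and let f map each placement P' of the expanded game to the capacitated placement f(P') with f(P')_i = { P'(i,k) : 1 ≤ k ≤ c(i) }. Then (1) for every placement P' of the expanded game, every node i ∈ V and every 1 ≤ k ≤ c(i), the cost of node (i,k) in the expanded game under P' equals cost_i(f(P')) in the capacitated game; and (2) P' is a pure Nash equilibrium of the expanded game if and only if f(P') is a pure Nash equilibrium of the capacitated game. -/

import Mathlib

open Finset

/-- Access cost in the capacitated game: node `i` accesses object `α` from the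
nearest node whose cache contains `α`, or from the server at cost `D`. -/
noncomputable def accessCostCap {V O : Type*} [Fintype V] [DecidableEq O]
    (d : V → V → ℝ) (D : ℝ) (P : V → Finset O) (i : V) (α : O) : ℝ :=
  haveI := Classical.decEq ℝ
  (insert D ((Finset.univ.filter (fun j => α ∈ P j)).image (d i))).min'
    (Finset.insert_nonempty _ _)

/-- Total cost of node `i` in the capacitated game. -/
noncomputable def nodeCostCap {V O : Type*} [Fintype V] [Fintype O] [DecidableEq O]
    (d : V → V → ℝ) (r : V → O → ℝ) (D : ℝ) (P : V → Finset O) (i : V) : ℝ :=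
  ∑ α : O, r i α * accessCostCap d D P i α

/-- Access cost in the expanded unit-capacity game, whose nodes are the pairs
`(i, k)` with `i ∈ V` and `k < c i`, with distances inherited from `V`. -/
noncomputable def accessCostExp {V O : Type*} [Fintype V] [DecidableEq V] [DecidableEq O]
    (d : V → V → ℝ) (D : ℝ) (c : V → ℕ)
    (P' : ((i : V) × Fin (c i)) → O) (v : (i : V) × Fin (c i)) (α : O) : ℝ :=
  haveI := Classical.decEq ℝ
  (insert D ((Finset.univ.filter (fun w : (i : V) × Fin (c i) => P' w = α)).image
      (fun w => d v.1 w.1))).min' (Finset.insert_nonempty _ _)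

/-- Total cost of node `v = (i,k)` in the expanded unit-capacity game. -/
noncomputable def nodeCostExp {V O : Type*} [Fintype V] [Fintype O] [DecidableEq V] [DecidableEq O]
    (d : V → V → ℝ) (r : V → O → ℝ) (D : ℝ) (c : V → ℕ)
    (P' : ((i : V) × Fin (c i)) → O) (v : (i : V) × Fin (c i)) : ℝ :=
  ∑ α : O, r v.1 α * accessCostExp d D c P' v α

/-- The map `f` sending a placement of the expanded game to the corresponding
capacitated placement: node `i` stores the set of objects stored by its copies. -/
def collapsePlacement {V O : Type*} [DecidableEq O] (c : V → ℕ)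
    (P' : ((i : V) × Fin (c i)) → O) : V → Finset O :=
  fun i => Finset.univ.image (fun k : Fin (c i) => P' ⟨i, k⟩)


set_option linter.unusedSectionVars false

lemma min'_eq_min' {s t : Finset ℝ} (h : s = t) {hs : s.Nonempty} {ht : t.Nonempty} :
    s.min' hs = t.min' ht := by subst h; rfl

lemma min'_eq_zero_of {s : Finset ℝ} (hne : s.Nonempty) (h0 : (0:ℝ) ∈ s)
    (hnn : ∀ x ∈ s, (0:ℝ) ≤ x) : s.min' hne = 0 :=
  le_antisymm (Finset.min'_le s 0 h0) (Finset.le_min' s hne 0 hnn)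

/-- External access cost: nearest holder of `α` other than `i` itself, or the server. -/
noncomputable def extCost {V O : Type*} [Fintype V] [DecidableEq V] [DecidableEq O]
    (d : V → V → ℝ) (D : ℝ) (P : V → Finset O) (i : V) (α : O) : ℝ :=
  haveI := Classical.decEq ℝ
  (insert D ((Finset.univ.filter (fun j => j ≠ i ∧ α ∈ P j)).image (d i))).min'
    (Finset.insert_nonempty _ _)

section
variable {V O : Type*} [Fintype V] [DecidableEq V] [DecidableEq O]
variable {d : V → V → ℝ} {D : ℝ}

lemma extCost_nonneg (hd : ∀ i j, 0 ≤ d i j) (hD0 : 0 ≤ D)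
    (P : V → Finset O) (i : V) (α : O) : 0 ≤ extCost d D P i α := by
  classical
  rw [extCost]
  apply Finset.le_min'
  intro x hx
  rcases Finset.mem_insert.1 hx with h | h
  · exact h ▸ hD0
  · rcases Finset.mem_image.1 h with ⟨j, _, rfl⟩
    exact hd i j

lemma extCost_congr {P P₂ : V → Finset O} {i : V}
    (h : ∀ j, j ≠ i → P j = P₂ j) (α : O) :
    extCost d D P i α = extCost d D P₂ i α := by
  rw [extCost, extCost]
  apply min'_eq_min'
  congr 1
  congr 1
  apply Finset.filter_congr
  intro j _
  by_cases hj : j = i <;> simp [hj, h]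

lemma mem_collapse {c : V → ℕ} {P' : ((i : V) × Fin (c i)) → O} {j : V} {α : O} :
    α ∈ collapsePlacement c P' j ↔ ∃ k : Fin (c j), P' ⟨j, k⟩ = α := by
  simp [collapsePlacement]

lemma accessCostCap_eq (hd : ∀ i j, 0 ≤ d i j) (hdiag : ∀ i, d i i = 0) (hD0 : 0 ≤ D)
    (P : V → Finset O) (i : V) (α : O) :
    accessCostCap d D P i α = if α ∈ P i then 0 else extCost d D P i α := by
  classical
  rw [accessCostCap]
  split_ifs with h
  · apply min'_eq_zero_of
    · refine Finset.mem_insert_of_mem (Finset.mem_image.2 ⟨i, ?_, hdiag i⟩)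
      simp [h]
    · intro x hx
      rcases Finset.mem_insert.1 hx with hx | hx
      · exact hx ▸ hD0
      · rcases Finset.mem_image.1 hx with ⟨j, _, rfl⟩
        exact hd i j
  · rw [extCost]
    apply min'_eq_min'
    congr 2
    apply Finset.filter_congr
    intro j _
    constructor
    · intro hj
      exact ⟨fun hji => h (hji ▸ hj), hj⟩
    · exact fun hj => hj.2

lemma accessCostExp_eq (hd : ∀ i j, 0 ≤ d i j) (hdiag : ∀ i, d i i = 0) (hD0 : 0 ≤ D)
    (c : V → ℕ) (P' : ((i : V) × Fin (c i)) → O) (v : (i : V) × Fin (c i)) (α : O) :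
    accessCostExp d D c P' v α =
      if α ∈ collapsePlacement c P' v.1 then 0
      else extCost d D (collapsePlacement c P') v.1 α := by
  classical
  rw [accessCostExp]
  split_ifs with h
  · rcases mem_collapse.1 h with ⟨k, hk⟩
    apply min'_eq_zero_of
    · refine Finset.mem_insert_of_mem (Finset.mem_image.2 ⟨⟨v.1, k⟩, ?_, hdiag v.1⟩)
      simp [hk]
    · intro x hx
      rcases Finset.mem_insert.1 hx with hx | hx
      · exact hx ▸ hD0
      · rcases Finset.mem_image.1 hx with ⟨w, _, rfl⟩
        exact hd v.1 w.1
  · rw [extCost]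
    apply min'_eq_min'
    congr 1
    ext x
    simp only [Finset.mem_image, Finset.mem_filter, Finset.mem_univ, true_and]
    constructor
    · rintro ⟨⟨j, l⟩, hw, rfl⟩
      have hji : j ≠ v.1 := by
        rintro rfl
        exact h (mem_collapse.2 ⟨l, hw⟩)
      exact ⟨j, ⟨hji, mem_collapse.2 ⟨l, hw⟩⟩, rfl⟩
    · rintro ⟨j, ⟨hji, hjc⟩, rfl⟩
      rcases mem_collapse.1 hjc with ⟨l, hl⟩
      exact ⟨⟨j, l⟩, hl, rfl⟩
end

section
variable {V O : Type*} [Fintype V] [Fintype O] [DecidableEq V] [DecidableEq O]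
variable {d : V → V → ℝ} {r : V → O → ℝ} {D : ℝ}

lemma sum_ite_split (T : Finset O) (f : O → ℝ) :
    ∑ α : O, (if α ∈ T then 0 else f α) = (∑ α : O, f α) - ∑ α ∈ T, f α := by
  have h : ∀ α : O, (if α ∈ T then 0 else f α) = f α - (if α ∈ T then f α else 0) := by
    intro α; split_ifs <;> ring
  rw [Finset.sum_congr rfl (fun α _ => h α), Finset.sum_sub_distrib]
  congr 1
  rw [Finset.sum_ite_mem, Finset.univ_inter]

lemma nodeCostCap_eq (hd : ∀ i j, 0 ≤ d i j) (hdiag : ∀ i, d i i = 0) (hD0 : 0 ≤ D)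
    (P : V → Finset O) (i : V) :
    nodeCostCap d r D P i =
      (∑ α : O, r i α * extCost d D P i α) - ∑ α ∈ P i, r i α * extCost d D P i α := by
  rw [nodeCostCap, ← sum_ite_split (P i) (fun α => r i α * extCost d D P i α)]
  apply Finset.sum_congr rfl
  intro α _
  rw [accessCostCap_eq hd hdiag hD0]
  split_ifs <;> ring

lemma nodeCostExp_eq (hd : ∀ i j, 0 ≤ d i j) (hdiag : ∀ i, d i i = 0) (hD0 : 0 ≤ D)
    (c : V → ℕ) (P' : ((i : V) × Fin (c i)) → O) (v : (i : V) × Fin (c i)) :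
    nodeCostExp d r D c P' v =
      (∑ α : O, r v.1 α * extCost d D (collapsePlacement c P') v.1 α)
        - ∑ α ∈ collapsePlacement c P' v.1,
            r v.1 α * extCost d D (collapsePlacement c P') v.1 α := by
  rw [nodeCostExp, ← sum_ite_split (collapsePlacement c P' v.1)
      (fun α => r v.1 α * extCost d D (collapsePlacement c P') v.1 α)]
  apply Finset.sum_congr rfl
  intro α _
  rw [accessCostExp_eq hd hdiag hD0]
  split_ifs <;> ring

lemma collapse_update (c : V → ℕ) (P' : ((i : V) × Fin (c i)) → O)
    (v : (i : V) × Fin (c i)) (β : O) :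
    collapsePlacement c (Function.update P' v β) =
      Function.update (collapsePlacement c P') v.1
        (insert β ((Finset.univ.erase v.2).image (fun l => P' ⟨v.1, l⟩))) := by
  obtain ⟨i, k⟩ := v
  funext j
  by_cases hj : j = i
  · subst hj
    rw [Function.update_self]
    ext γ
    simp only [collapsePlacement, Finset.mem_image, Finset.mem_univ, true_and,
      Finset.mem_insert, Finset.mem_erase, Function.update_apply, Sigma.mk.inj_iff,
      heq_eq_eq, true_and, and_true]
    constructor
    · rintro ⟨l, hl⟩
      by_cases hlk : l = k
      · simp [hlk] at hl; exact Or.inl hl.symm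
      · simp [hlk] at hl; exact Or.inr ⟨l, hlk, hl⟩
    · rintro (rfl | ⟨l, hlk, hl⟩)
      · exact ⟨k, by simp⟩
      · exact ⟨l, by simp [hlk, hl]⟩
  · rw [Function.update_of_ne hj]
    ext γ
    simp only [collapsePlacement, Finset.mem_image, Finset.mem_univ, true_and]
    have : ∀ l : Fin (c j), Function.update P' ⟨i, k⟩ β ⟨j, l⟩ = P' ⟨j, l⟩ := by
      intro l
      apply Function.update_of_ne
      simp [Sigma.mk.inj_iff, hj]
    simp [this]
end


lemma key_lemma {O : Type*} [Fintype O] [DecidableEq O] {n : ℕ}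
    (g : Fin n → O) (val : O → ℝ) (hval : ∀ α, 0 ≤ val α)
    (H : ∀ (k : Fin n) (β : O),
      ∑ α ∈ insert β ((Finset.univ.erase k).image g), val α
        ≤ ∑ α ∈ Finset.univ.image g, val α)
    (Q : Finset O) (hQ : Q.card ≤ n) :
    ∑ α ∈ Q, val α ≤ ∑ α ∈ Finset.univ.image g, val α := by
  classical
  set S := Finset.univ.image g with hS
  have hins : ∀ k : Fin n, S = insert (g k) ((Finset.univ.erase k).image g) := by
    intro k
    rw [hS]
    conv_lhs => rw [← Finset.insert_erase (Finset.mem_univ k)]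
    rw [Finset.image_insert]
  have hTsub : ∀ k : Fin n, (Finset.univ.erase k).image g ⊆ S := by
    intro k
    rw [hS]
    exact Finset.image_subset_image (Finset.erase_subset _ _)
  have claim1 : ∀ β ∉ S, ∀ α ∈ S, val β ≤ val α := by
    intro β hβ α hα
    rcases Finset.mem_image.1 hα with ⟨k, -, rfl⟩
    have hβT : β ∉ (Finset.univ.erase k).image g := fun hmem => hβ (hTsub k hmem)
    have hH := H k β
    rw [Finset.sum_insert hβT] at hH
    by_cases hgk : g k ∈ (Finset.univ.erase k).image g
    · have hSe : S = (Finset.univ.erase k).image g := by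
        rw [hins k, Finset.insert_eq_self.2 hgk]
      rw [hSe] at hH
      have hb : val β ≤ 0 := by linarith
      linarith [hval (g k)]
    · rw [hins k, Finset.sum_insert hgk] at hH
      linarith
  have main : ∑ α ∈ Q \ S, val α ≤ ∑ α ∈ S \ Q, val α := by
    by_cases hdup : ∃ k l : Fin n, k ≠ l ∧ g k = g l
    · rcases hdup with ⟨k, l, hkl, hgkl⟩
      have hzero : ∀ β ∈ Q \ S, val β = 0 := by
        intro β hβ
        have hβS : β ∉ S := (Finset.mem_sdiff.1 hβ).2
        have hβT : β ∉ (Finset.univ.erase k).image g := fun hmem => hβS (hTsub k hmem)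
        have hgk : g k ∈ (Finset.univ.erase k).image g :=
          Finset.mem_image.2 ⟨l, Finset.mem_erase.2 ⟨Ne.symm hkl, Finset.mem_univ l⟩, hgkl.symm⟩
        have hH := H k β
        have hSe : S = (Finset.univ.erase k).image g := by
          rw [hins k, Finset.insert_eq_self.2 hgk]
        rw [Finset.sum_insert hβT, ← hSe] at hH
        have := hval β
        linarith
      rw [Finset.sum_eq_zero hzero]
      exact Finset.sum_nonneg fun α _ => hval α
    · push_neg at hdup
      have hinj : Function.Injective g := by
        intro a b hab
        by_contra hne
        exact hdup a b hne hab
      have hcardS : S.card = n := by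
        rw [hS, Finset.card_image_of_injective _ hinj, Finset.card_univ, Fintype.card_fin]
      have hcard : (Q \ S).card ≤ (S \ Q).card := by
        have h1 := Finset.card_sdiff_add_card_inter Q S
        have h2 := Finset.card_sdiff_add_card_inter S Q
        have h3 : (Q ∩ S).card = (S ∩ Q).card := by rw [Finset.inter_comm]
        omega
      rcases Finset.eq_empty_or_nonempty (Q \ S) with he | hne
      · rw [he, Finset.sum_empty]
        exact Finset.sum_nonneg fun α _ => hval α
      · have hSQ : (S \ Q).Nonempty :=
          Finset.card_pos.1 (lt_of_lt_of_le (Finset.card_pos.2 hne) hcard)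
        set m := ((S \ Q).image val).min' (hSQ.image val) with hm
        have hm_mem : m ∈ (S \ Q).image val := Finset.min'_mem _ _
        rcases Finset.mem_image.1 hm_mem with ⟨α₀, hα₀, hmv⟩
        have hm0 : 0 ≤ m := hmv ▸ hval α₀
        have h1 : ∑ α ∈ Q \ S, val α ≤ (Q \ S).card • m := by
          apply Finset.sum_le_card_nsmul
          intro β hβ
          rw [← hmv]
          exact claim1 β (Finset.mem_sdiff.1 hβ).2 α₀ (Finset.mem_sdiff.1 hα₀).1
        have h2 : (S \ Q).card • m ≤ ∑ α ∈ S \ Q, val α := by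
          apply Finset.card_nsmul_le_sum
          intro α hα
          exact Finset.min'_le _ _ (Finset.mem_image_of_mem val hα)
        have h3 : ((Q \ S).card : ℝ) * m ≤ ((S \ Q).card : ℝ) * m :=
          mul_le_mul_of_nonneg_right (by exact_mod_cast hcard) hm0
        rw [nsmul_eq_mul] at h1 h2
        linarith
  have hQsplit := Finset.sum_inter_add_sum_sdiff Q S val
  have hSsplit := Finset.sum_inter_add_sum_sdiff S Q val
  rw [Finset.inter_comm] at hQsplit
  linarith

/-- Reduction from arbitrary cache capacities to unit caches for sum utilities:
(1) the cost of each copy `(i,k)` in the expanded game equals the cost of `i`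
in the capacitated game under the collapsed placement, and (2) a placement of
the expanded game is a pure Nash equilibrium iff its collapse is a pure Nash
equilibrium of the capacitated game. -/
theorem capacitated_to_unit_cache_reduction
    {V O : Type*} [Fintype V] [Fintype O] [Nonempty V] [Nonempty O]
    [DecidableEq V] [DecidableEq O]
    (d : V → V → ℝ) (r : V → O → ℝ) (D : ℝ) (c : V → ℕ)
    (hd_nonneg : ∀ i j, 0 ≤ d i j) (hd_diag : ∀ i, d i i = 0)
    (hr_nonneg : ∀ i α, 0 ≤ r i α) (hD : ∀ i j, d i j ≤ D)
    (hc : ∀ i, 1 ≤ c i)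
    (P' : ((i : V) × Fin (c i)) → O) :
    (∀ (i : V) (k : Fin (c i)),
        nodeCostExp d r D c P' ⟨i, k⟩ = nodeCostCap d r D (collapsePlacement c P') i) ∧
    ((∀ (v : (i : V) × Fin (c i)) (β : O),
        nodeCostExp d r D c P' v ≤ nodeCostExp d r D c (Function.update P' v β) v) ↔
     (∀ (i : V) (Q : Finset O), Q.card ≤ c i →
        nodeCostCap d r D (collapsePlacement c P') i ≤
          nodeCostCap d r D (Function.update (collapsePlacement c P') i Q) i))  := by
  classical
  obtain ⟨i0⟩ := (inferInstance : Nonempty V)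
  have hD0 : (0:ℝ) ≤ D := by
    have h1 := hd_diag i0
    have h2 := hD i0 i0
    linarith
  -- cost of node i in the capacitated game when its cache is replaced by Q
  have hcapU : ∀ (i : V) (Q : Finset O),
      nodeCostCap d r D (Function.update (collapsePlacement c P') i Q) i =
        (∑ α : O, r i α * extCost d D (collapsePlacement c P') i α)
          - ∑ α ∈ Q, r i α * extCost d D (collapsePlacement c P') i α := by
    intro i Q
    rw [nodeCostCap_eq hd_nonneg hd_diag hD0]
    have hcong : ∀ α : O, extCost d D (Function.update (collapsePlacement c P') i Q) i α
        = extCost d D (collapsePlacement c P') i α := fun α =>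
      extCost_congr (fun j hj => by rw [Function.update_of_ne hj]) α
    simp only [hcong, Function.update_self]
  -- cost of copy v in the expanded game when it deviates to β
  have hexpU : ∀ (v : (i : V) × Fin (c i)) (β : O),
      nodeCostExp d r D c (Function.update P' v β) v =
        (∑ α : O, r v.1 α * extCost d D (collapsePlacement c P') v.1 α)
          - ∑ α ∈ insert β ((Finset.univ.erase v.2).image (fun l => P' ⟨v.1, l⟩)),
              r v.1 α * extCost d D (collapsePlacement c P') v.1 α := by
    intro v β
    rw [nodeCostExp_eq hd_nonneg hd_diag hD0, collapse_update c P' v β]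
    have hcong : ∀ α : O, extCost d D (Function.update (collapsePlacement c P') v.1
          (insert β ((Finset.univ.erase v.2).image (fun l => P' ⟨v.1, l⟩)))) v.1 α
        = extCost d D (collapsePlacement c P') v.1 α := fun α =>
      extCost_congr (fun j hj => by rw [Function.update_of_ne hj]) α
    simp only [hcong, Function.update_self]
  constructor
  · -- part 1
    intro i k
    rw [nodeCostExp_eq hd_nonneg hd_diag hD0, nodeCostCap_eq hd_nonneg hd_diag hD0]
  · -- part 2
    constructor
    · intro hNE i Q hQ
      rw [nodeCostCap_eq hd_nonneg hd_diag hD0, hcapU i Q]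
      have hkey := key_lemma (fun k : Fin (c i) => P' ⟨i, k⟩)
        (fun α => r i α * extCost d D (collapsePlacement c P') i α)
        (fun α => mul_nonneg (hr_nonneg i α) (extCost_nonneg hd_nonneg hD0 _ i α))
        (fun k β => by
          have h := hNE ⟨i, k⟩ β
          rw [nodeCostExp_eq hd_nonneg hd_diag hD0, hexpU ⟨i, k⟩ β] at h
          have hPCi : collapsePlacement c P' i
              = Finset.univ.image (fun k : Fin (c i) => P' ⟨i, k⟩) := rfl
          rw [hPCi] at h
          linarith)
        Q hQ
      have hPCi : collapsePlacement c P' i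
          = Finset.univ.image (fun k : Fin (c i) => P' ⟨i, k⟩) := rfl
      rw [hPCi]
      linarith
    · intro hNE v β
      rw [nodeCostExp_eq hd_nonneg hd_diag hD0, hexpU v β]
      have hcard : (insert β ((Finset.univ.erase v.2).image (fun l => P' ⟨v.1, l⟩))).card
          ≤ c v.1 := by
        have h1 := Finset.card_insert_le β ((Finset.univ.erase v.2).image (fun l => P' ⟨v.1, l⟩))
        have h2 := Finset.card_image_le (s := Finset.univ.erase v.2) (f := fun l => P' ⟨v.1, l⟩)
        have h3 : (Finset.univ.erase v.2).card = c v.1 - 1 := by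
          rw [Finset.card_erase_of_mem (Finset.mem_univ _), Finset.card_univ, Fintype.card_fin]
        have h4 := hc v.1
        omega
      have h := hNE v.1 _ hcard
      rw [nodeCostCap_eq hd_nonneg hd_diag hD0, hcapU] at h
      linarith
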